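/- arXiv:1602.07764 — 2 statements merged into one kernel-verified Lean document; each statement's English description precedes it below -/
import Mathlib

section
/- Let V ∈ R^{(Y·R)×X} with entries V_{(n,m),i} = f_π(l|eₙ) f_O(eₙ|i) f_R(eₘ|i,l) / P(a=l|x=i), where P(a=l|x=i) = Σₙ f_π(l|eₙ) f_O(eₙ|i) > 0 and Σₘ f_R(eₘ|i,l) = 1. Define ρ(i,l) = Σₘ Σₙ V_{(n,m),i} / f_π(l|eₙ). Then ρ(i,l) = 1 / P(a=l|x=i), and consequently f_O(eₙ|i) = Σₘ V_{(n,m),i} / (f_π(l|eₙ) ρ(i,l)). -/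
/-- Observation recovery (Lemma 1): with
`V_{(n,m),i} = f_π(l|eₙ) f_O(eₙ|i) f_R(eₘ|i,l) / P(a=l|x=i)` and
`ρ(i,l) = Σₘ Σₙ V_{(n,m),i} / f_π(l|eₙ)`, one has `ρ(i,l) = 1/P(a=l|x=i)` and
`f_O(eₙ|i) = Σₘ V_{(n,m),i} / (f_π(l|eₙ) ρ(i,l))`. -/
theorem observation_recovery {Y R : ℕ}
    (fπ : Fin Y → ℝ) (fO : Fin Y → ℝ) (fR : Fin R → ℝ)
    (hfπ : ∀ n, 0 < fπ n)
    (hfO : ∀ n, 0 ≤ fO n) (hfOsum : ∑ n, fO n = 1)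
    (hfRsum : ∑ m, fR m = 1)
    (Pal : ℝ) (hPal : Pal = ∑ n, fπ n * fO n) (hPalpos : 0 < Pal)
    (V : Fin Y × Fin R → ℝ)
    (hV : ∀ n m, V (n, m) = fπ n * fO n * fR m / Pal)
    (ρ : ℝ) (hρ : ρ = ∑ m, ∑ n, V (n, m) / fπ n) :
    ρ = 1 / Pal ∧ ∀ n, fO n = ∑ m, V (n, m) / (fπ n * ρ) := by
  have hρ' : ρ = 1 / Pal := by
    rw [hρ]
    have : ∀ m n, V (n, m) / fπ n = fO n * fR m / Pal := by
      intro m n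
      rw [hV]
      have h1 := mul_inv_cancel₀ (hfπ n).ne'
      have h2 := mul_inv_cancel₀ hPalpos.ne'
      field_simp
      linear_combination fO n * fR m * h1
    simp_rw [this]
    simp_rw [← Finset.sum_div, ← Finset.sum_mul, hfOsum, one_mul, hfRsum]
  refine ⟨hρ', fun n => ?_⟩
  have : ∀ m, V (n, m) / (fπ n * ρ) = fO n * fR m := by
    intro m
    rw [hV, hρ']
    have h1 := mul_inv_cancel₀ (hfπ n).ne'
    field_simp
    linear_combination fO n * fR m * h1
  simp_rw [this, ← Finset.mul_sum, hfRsum, mul_one]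
end

section
/- Consider a POMDP with state-action value function Q_{π,M} satisfying the Poisson equation Q(x,a) = r̄(x,a) − η + Σ_{x'} f_T(x'|x,a) Σ_{a'} f_π(a'|x') Q(x',a'). Suppose for every pair of state-action pairs (x,a), (x',a') there exists a policy reaching (x',a') from (x,a) in expected time at most D, rewards lie in [0, r_max], and π is optimal (maximizes average reward η). Then max_{x,a} Q(x,a) − min_{x,a} Q(x,a) ≤ r_max · D. -/
/-- Range of the optimal bias function: if every state-action pair can reach every other
state-action pair with expected passage time at most `D` (encoded through a bounded
solution of the hitting-time Bellman equation), rewards lie in `[0, r_max]`, and `Q`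
satisfies the average-reward Bellman optimality (Poisson) equation, then the range of `Q`
is at most `r_max · D`. -/
theorem optimal_bias_range {S A : Type*} [Fintype S] [Fintype A] [Nonempty S] [Nonempty A]
    (P : S → A → S → ℝ)
    (hP0 : ∀ x a x', 0 ≤ P x a x') (hP1 : ∀ x a, ∑ x', P x a x' = 1)
    (r : S → A → ℝ) (rmax : ℝ)
    (hr : ∀ x a, 0 ≤ r x a ∧ r x a ≤ rmax)
    (D : ℝ)
    (hD : ∀ xtgt : S, ∀ atgt : A, ∃ (π : S → A → ℝ) (τ : S → A → ℝ),
      (∀ x a, 0 ≤ π x a) ∧ (∀ x, ∑ a, π x a = 1) ∧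
      τ xtgt atgt = 0 ∧ (∀ x a, 0 ≤ τ x a ∧ τ x a ≤ D) ∧
      (∀ x a, (x, a) ≠ (xtgt, atgt) →
        τ x a = 1 + ∑ x', P x a x' * ∑ a', π x' a' * τ x' a'))
    (η : ℝ) (Q : S → A → ℝ)
    (hQ : ∀ x a, Q x a =
      r x a - η + ∑ x', P x a x' * Finset.univ.sup' Finset.univ_nonempty (Q x')) :
    ∀ x a x' a', Q x a - Q x' a' ≤ rmax * D := by
  classical
  set V : S → ℝ := fun s => Finset.univ.sup' Finset.univ_nonempty (Q s) with hVdef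
  have hQV : ∀ s b, Q s b ≤ V s := fun s b => Finset.le_sup' (Q s) (Finset.mem_univ b)
  -- rmax ≥ 0
  have hrmax : 0 ≤ rmax := by
    obtain ⟨s⟩ := (inferInstance : Nonempty S); obtain ⟨b⟩ := (inferInstance : Nonempty A)
    exact le_trans (hr s b).1 (hr s b).2
  -- η ≥ 0
  have hη0 : 0 ≤ η := by
    obtain ⟨p, -, hpmin⟩ := Finset.exists_min_image (Finset.univ : Finset (S × A))
      (fun q => Q q.1 q.2) Finset.univ_nonempty
    have h2 : ∀ s : S, Q p.1 p.2 ≤ V s := fun s =>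
      le_trans (hpmin (s, p.2) (Finset.mem_univ _)) (hQV s p.2)
    have h3 : Q p.1 p.2 ≤ ∑ x', P p.1 p.2 x' * V x' := by
      calc Q p.1 p.2 = ∑ x', P p.1 p.2 x' * Q p.1 p.2 := by
            rw [← Finset.sum_mul, hP1, one_mul]
        _ ≤ ∑ x', P p.1 p.2 x' * V x' := Finset.sum_le_sum fun x' _ =>
            mul_le_mul_of_nonneg_left (h2 x') (hP0 _ _ _)
    have h1 : Q p.1 p.2 = r p.1 p.2 - η + ∑ x', P p.1 p.2 x' * V x' := hQ p.1 p.2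
    have h4 := (hr p.1 p.2).1
    linarith
  -- η ≤ rmax
  have hηr : η ≤ rmax := by
    obtain ⟨p, -, hpmax⟩ := Finset.exists_max_image (Finset.univ : Finset (S × A))
      (fun q => Q q.1 q.2) Finset.univ_nonempty
    have h2 : ∀ s : S, V s ≤ Q p.1 p.2 := fun s =>
      Finset.sup'_le _ _ fun b _ => hpmax (s, b) (Finset.mem_univ _)
    have h3 : ∑ x', P p.1 p.2 x' * V x' ≤ Q p.1 p.2 := by
      calc ∑ x', P p.1 p.2 x' * V x'
          ≤ ∑ x', P p.1 p.2 x' * Q p.1 p.2 := Finset.sum_le_sum fun x' _ =>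
            mul_le_mul_of_nonneg_left (h2 x') (hP0 _ _ _)
        _ = Q p.1 p.2 := by rw [← Finset.sum_mul, hP1, one_mul]
    have h1 : Q p.1 p.2 = r p.1 p.2 - η + ∑ x', P p.1 p.2 x' * V x' := hQ p.1 p.2
    have h4 := (hr p.1 p.2).2
    linarith
  intro x a x' a'
  obtain ⟨π, τ, hπ0, hπ1, hτ00, hτbd, hτeq⟩ := hD x a
  have hD0 : 0 ≤ D := le_trans (hτbd x' a').1 (hτbd x' a').2
  -- key: for all ε > 0, Q x a - Q s b ≤ (η + ε) * τ s b
  have key : ∀ ε : ℝ, 0 < ε → ∀ s b, 0 ≤ Q s b + (η + ε) * τ s b - Q x a := by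
    intro ε hε
    by_contra hcon
    push_neg at hcon
    obtain ⟨s, b, hsb⟩ := hcon
    obtain ⟨p, -, hpmin⟩ := Finset.exists_min_image (Finset.univ : Finset (S × A))
      (fun q => Q q.1 q.2 + (η + ε) * τ q.1 q.2 - Q x a) Finset.univ_nonempty
    set c : ℝ := Q p.1 p.2 + (η + ε) * τ p.1 p.2 - Q x a with hc
    have hcneg : c < 0 := lt_of_le_of_lt (hpmin (s, b) (Finset.mem_univ _)) hsb
    have hpne : (p.1, p.2) ≠ (x, a) := by
      intro h
      have h1 : p.1 = x := congrArg Prod.fst h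
      have h2 : p.2 = a := congrArg Prod.snd h
      rw [hc, h1, h2, hτ00] at hcneg
      simp at hcneg
    -- inner inequality per next state
    have inner : ∀ s'' : S,
        c + Q x a ≤ V s'' + (η + ε) * ∑ a'', π s'' a'' * τ s'' a'' := by
      intro s''
      have h1 : ∑ a'', π s'' a'' * Q s'' a'' ≤ V s'' := by
        calc ∑ a'', π s'' a'' * Q s'' a''
            ≤ ∑ a'', π s'' a'' * V s'' := Finset.sum_le_sum fun a'' _ =>
              mul_le_mul_of_nonneg_left (hQV s'' a'') (hπ0 _ _)
          _ = V s'' := by rw [← Finset.sum_mul, hπ1, one_mul]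
      have h2 : c + Q x a ≤ ∑ a'', π s'' a'' * (Q s'' a'' + (η + ε) * τ s'' a'') := by
        calc c + Q x a = ∑ a'', π s'' a'' * (c + Q x a) := by
              rw [← Finset.sum_mul, hπ1, one_mul]
          _ ≤ ∑ a'', π s'' a'' * (Q s'' a'' + (η + ε) * τ s'' a'') :=
              Finset.sum_le_sum fun a'' _ => mul_le_mul_of_nonneg_left
                (by have := hpmin (s'', a'') (Finset.mem_univ _); dsimp only at this; linarith)
                (hπ0 _ _)
      have h3 : ∑ a'', π s'' a'' * (Q s'' a'' + (η + ε) * τ s'' a'')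
          = (∑ a'', π s'' a'' * Q s'' a'') + (η + ε) * ∑ a'', π s'' a'' * τ s'' a'' := by
        rw [Finset.mul_sum, ← Finset.sum_add_distrib]
        exact Finset.sum_congr rfl fun a'' _ => by ring
      linarith
    -- outer inequality
    have houter : c + Q x a ≤ (∑ x'', P p.1 p.2 x'' * V x'')
        + (η + ε) * ∑ x'', P p.1 p.2 x'' * ∑ a'', π x'' a'' * τ x'' a'' := by
      have h2 : c + Q x a ≤ ∑ x'', P p.1 p.2 x''
          * (V x'' + (η + ε) * ∑ a'', π x'' a'' * τ x'' a'') := by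
        calc c + Q x a = ∑ x'', P p.1 p.2 x'' * (c + Q x a) := by
              rw [← Finset.sum_mul, hP1, one_mul]
          _ ≤ _ := Finset.sum_le_sum fun x'' _ =>
              mul_le_mul_of_nonneg_left (inner x'') (hP0 _ _ _)
      have h3 : ∑ x'', P p.1 p.2 x'' * (V x'' + (η + ε) * ∑ a'', π x'' a'' * τ x'' a'')
          = (∑ x'', P p.1 p.2 x'' * V x'')
            + (η + ε) * ∑ x'', P p.1 p.2 x'' * ∑ a'', π x'' a'' * τ x'' a'' := by
        rw [Finset.mul_sum, ← Finset.sum_add_distrib]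
        exact Finset.sum_congr rfl fun x'' _ => by ring
      linarith
    have hQp : Q p.1 p.2 = r p.1 p.2 - η + ∑ x'', P p.1 p.2 x'' * V x'' := hQ p.1 p.2
    have hτp := hτeq p.1 p.2 hpne
    have hexp : c = r p.1 p.2 - η + (∑ x'', P p.1 p.2 x'' * V x'') + (η + ε)
        + (η + ε) * (∑ x'', P p.1 p.2 x'' * ∑ a'', π x'' a'' * τ x'' a'') - Q x a := by
      rw [hc, hQp, hτp]; ring
    have h4 := (hr p.1 p.2).1
    linarith
  -- conclude
  have final : ∀ ε : ℝ, 0 < ε → Q x a - Q x' a' ≤ rmax * D + ε := by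
    intro ε hε
    have hε' : 0 < ε / (D + 1) := by positivity
    have hk := key (ε / (D + 1)) hε' x' a'
    have hτ1 := (hτbd x' a').1
    have hτ2 := (hτbd x' a').2
    have h5 : (η + ε / (D + 1)) * τ x' a' ≤ (rmax + ε / (D + 1)) * D := by
      have := mul_le_mul_of_nonneg_left hτ2 (by linarith : (0:ℝ) ≤ η + ε / (D + 1))
      have := mul_le_mul_of_nonneg_right (by linarith : η + ε / (D+1) ≤ rmax + ε / (D+1)) hD0
      linarith
    have h6 : ε / (D + 1) * D ≤ ε := by
      have h7 : ε / (D + 1) * (D + 1) = ε := by field_simp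
      nlinarith
    linarith
  by_contra hfin
  push_neg at hfin
  have := final ((Q x a - Q x' a' - rmax * D) / 2) (by linarith)
  linarith
end
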